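/- Let Γ ⊆ ℝⁿ be an n-attractor. Then the boundary ∂Γ is porous (satisfies the ball condition). -/

import Mathlib

open Metric MeasureTheory Set

set_option maxHeartbeats 1000000

/-- A closed set F ⊆ ℝⁿ is porous (satisfies the ball condition) if there is
η ∈ (0,1) such that for every x ∈ ℝⁿ and every r ∈ (0,1) there is y with
B(y,ηr) ⊆ B(x,r) and B(y,ηr) ∩ F = ∅. -/
def IsPorousSet {n : ℕ} (F : Set (EuclideanSpace ℝ (Fin n))) : Prop :=
  ∃ η : ℝ, 0 < η ∧ η < 1 ∧
    ∀ x : EuclideanSpace ℝ (Fin n), ∀ r : ℝ, 0 < r → r < 1 →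
      ∃ y : EuclideanSpace ℝ (Fin n),
        Metric.closedBall y (η * r) ⊆ Metric.closedBall x r ∧
        Metric.closedBall y (η * r) ∩ F = ∅

lemma aux_linear_of_isometry {E : Type*} [NormedAddCommGroup E] [InnerProductSpace ℝ E]
    (g : E → E) (h0 : g 0 = 0) (hiso : ∀ x y, dist (g x) (g y) = dist x y) :
    ∃ L : E →ₗ[ℝ] E, ⇑L = g := by
  have hnorm : ∀ x, ‖g x‖ = ‖x‖ := by
    intro x
    have := hiso x 0
    rwa [h0, dist_zero_right, dist_zero_right] at this
  have hdist : ∀ x y, ‖g x - g y‖ = ‖x - y‖ := by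
    intro x y
    have := hiso x y
    rwa [dist_eq_norm, dist_eq_norm] at this
  have hinner : ∀ x y, (inner ℝ (g x) (g y) : ℝ) = inner ℝ x y := by
    intro x y
    have h1 := norm_sub_sq_real (g x) (g y)
    have h2 := norm_sub_sq_real x y
    rw [hdist, hnorm, hnorm] at h1
    linarith
  have hadd : ∀ x y, g (x + y) = g x + g y := by
    intro x y
    have key : ‖g (x + y) - (g x + g y)‖ ^ 2 = 0 := by
      have e : ∀ u v w : E, ‖u - (v + w)‖ ^ 2 =
          ‖u‖^2 + ‖v‖^2 + ‖w‖^2 - 2 * inner ℝ u v - 2 * inner ℝ u w + 2 * inner ℝ v w := by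
        intro u v w
        rw [← real_inner_self_eq_norm_sq, ← real_inner_self_eq_norm_sq,
          ← real_inner_self_eq_norm_sq, ← real_inner_self_eq_norm_sq]
        simp only [inner_sub_left, inner_sub_right, inner_add_left, inner_add_right]
        rw [real_inner_comm v u, real_inner_comm w u, real_inner_comm w v]
        ring
      have e1 := e (g (x+y)) (g x) (g y)
      have e2 := e (x+y) x y
      rw [hinner, hinner, hinner, hnorm, hnorm, hnorm] at e1
      have : (x + y) - (x + y) = 0 := by abel
      rw [show x + y - (x + y) = (0:E) by abel] at e2
      simp at e2
      linarith
    have := pow_eq_zero_iff (n := 2) (by norm_num) |>.mp key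
    rw [norm_eq_zero, sub_eq_zero] at this
    exact this
  have hsmul : ∀ (c : ℝ) x, g (c • x) = c • g x := by
    intro c x
    have key : ‖g (c • x) - c • g x‖ ^ 2 = 0 := by
      have e : ∀ (u v : E), ‖u - c • v‖ ^ 2 = ‖u‖^2 - 2 * c * inner ℝ u v + c^2 * ‖v‖^2 := by
        intro u v
        rw [← real_inner_self_eq_norm_sq, ← real_inner_self_eq_norm_sq,
          ← real_inner_self_eq_norm_sq]
        simp only [inner_sub_left, inner_sub_right, real_inner_smul_left, real_inner_smul_right]
        rw [real_inner_comm v u]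
        ring
      have e1 := e (g (c • x)) (g x)
      have e2 := e (c • x) x
      rw [hinner, hnorm, hnorm] at e1
      rw [show c • x - c • x = (0:E) by abel] at e2
      simp at e2
      linarith
    have := pow_eq_zero_iff (n := 2) (by norm_num) |>.mp key
    rw [norm_eq_zero, sub_eq_zero] at this
    exact this
  exact ⟨{ toFun := g, map_add' := hadd, map_smul' := hsmul }, rfl⟩

lemma aux_similarity {n : ℕ} (f : EuclideanSpace ℝ (Fin n) → EuclideanSpace ℝ (Fin n))
    (ρ : ℝ) (hρ : 0 < ρ)
    (hsim : ∀ x y, dist (f x) (f y) = ρ * dist x y) :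
    (∀ A : Set (EuclideanSpace ℝ (Fin n)),
        volume (f '' A) = ENNReal.ofReal (ρ ^ n) * volume A) ∧
    (∀ z δ, 0 ≤ δ → f '' closedBall z δ = closedBall (f z) (ρ * δ)) ∧
    IsOpenMap f := by
  set g : EuclideanSpace ℝ (Fin n) → EuclideanSpace ℝ (Fin n) := fun x => ρ⁻¹ • (f x - f 0) with hg
  have hdistf : ∀ x y, ‖f x - f y‖ = ρ * ‖x - y‖ := by
    intro x y
    have := hsim x y
    rwa [dist_eq_norm, dist_eq_norm] at this
  have hgiso : ∀ x y, dist (g x) (g y) = dist x y := by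
    intro x y
    rw [dist_eq_norm, dist_eq_norm]
    have : g x - g y = ρ⁻¹ • (f x - f y) := by
      simp only [hg, ← smul_sub]
      congr 1
      abel
    rw [this, norm_smul, hdistf, Real.norm_eq_abs, abs_of_pos (inv_pos.mpr hρ)]
    field_simp
  have hg0 : g 0 = 0 := by simp [hg]
  obtain ⟨L, hL⟩ := aux_linear_of_isometry g hg0 hgiso
  have hLnorm : ∀ x, ‖L x‖ = ‖x‖ := by
    intro x
    have := hgiso x 0
    rw [hg0, dist_zero_right, dist_zero_right] at this
    rw [hL]; exact this
  have hfL : ∀ x, f x = f 0 + ρ • L x := by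
    intro x
    rw [hL]
    simp only [hg, smul_smul, mul_inv_cancel₀ hρ.ne', one_smul]
    abel
  have hLinj : Function.Injective L := by
    intro a b hab
    have : ‖L (a - b)‖ = 0 := by rw [map_sub, hab, sub_self, norm_zero]
    rw [hLnorm, norm_eq_zero, sub_eq_zero] at this
    exact this
  have hLsurj : Function.Surjective L := (LinearMap.injective_iff_surjective).mp hLinj
  have hfsurj : Function.Surjective f := by
    intro u
    obtain ⟨v, hv⟩ := hLsurj (ρ⁻¹ • (u - f 0))
    exact ⟨v, by rw [hfL, hv, smul_smul, mul_inv_cancel₀ hρ.ne', one_smul]; abel⟩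
  -- |det L| = 1
  have hdetL : |LinearMap.det L| = 1 := by
    have hB : L '' closedBall (0:EuclideanSpace ℝ (Fin n)) 1 = closedBall (0:EuclideanSpace ℝ (Fin n)) 1 := by
      apply Subset.antisymm
      · rintro _ ⟨x, hx, rfl⟩
        rw [mem_closedBall, dist_zero_right] at *
        rw [hLnorm]; exact hx
      · intro u hu
        obtain ⟨v, hv⟩ := hLsurj u
        refine ⟨v, ?_, hv⟩
        rw [mem_closedBall, dist_zero_right] at *
        rw [← hLnorm, hv]; exact hu
    have h1 := volume.addHaar_image_linearMap L (closedBall (0:EuclideanSpace ℝ (Fin n)) 1)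
    rw [hB] at h1
    have hpos : volume (closedBall (0:EuclideanSpace ℝ (Fin n)) 1) ≠ 0 :=
      (measure_closedBall_pos volume _ one_pos).ne'
    have hfin : volume (closedBall (0:EuclideanSpace ℝ (Fin n)) 1) ≠ ⊤ := measure_closedBall_lt_top.ne
    have : ENNReal.ofReal |LinearMap.det L| = 1 := by
      have h2 : ENNReal.ofReal |LinearMap.det L| * volume (closedBall (0:EuclideanSpace ℝ (Fin n)) 1)
          = 1 * volume (closedBall (0:EuclideanSpace ℝ (Fin n)) 1) := by rw [one_mul, ← h1]
      exact (ENNReal.mul_left_inj hpos hfin).mp h2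
    rw [← ENNReal.ofReal_one] at this
    have habs : (0:ℝ) ≤ |LinearMap.det L| := abs_nonneg _
    exact (ENNReal.ofReal_eq_ofReal_iff habs zero_le_one).mp this
  have hmeas : ∀ A : Set (EuclideanSpace ℝ (Fin n)), volume (f '' A) = ENNReal.ofReal (ρ ^ n) * volume A := by
    intro A
    have himg : f '' A = (fun y => f 0 + y) '' ((ρ • L : _ →ₗ[ℝ] _) '' A) := by
      rw [image_image]
      apply image_congr
      intro x _
      rw [hfL x]
      rfl
    have htrans : ∀ S : Set (EuclideanSpace ℝ (Fin n)), volume ((fun y => f 0 + y) '' S) = volume S := by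
      intro S
      have : (fun y => f 0 + y) '' S = (fun y => -f 0 + y) ⁻¹' S := by
        ext y
        simp only [mem_image, mem_preimage]
        constructor
        · rintro ⟨x, hx, rfl⟩; simpa using hx
        · intro h; exact ⟨-f 0 + y, h, by abel⟩
      rw [this, measure_preimage_add]
    rw [himg, htrans, volume.addHaar_image_linearMap, LinearMap.det_smul]
    congr 2
    rw [abs_mul, hdetL, mul_one, abs_pow, abs_of_pos hρ]
    congr 1
    simp [finrank_euclideanSpace_fin]
  have hball : ∀ z δ, 0 ≤ δ → f '' closedBall z δ = closedBall (f z) (ρ * δ) := by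
    intro z δ hδ
    apply Subset.antisymm
    · rintro _ ⟨x, hx, rfl⟩
      rw [mem_closedBall] at *
      rw [hsim]
      exact mul_le_mul_of_nonneg_left hx hρ.le
    · intro u hu
      obtain ⟨v, hv⟩ := hfsurj u
      refine ⟨v, ?_, hv⟩
      rw [mem_closedBall] at *
      rw [← hv, hsim] at hu
      exact le_of_mul_le_mul_left hu hρ
  refine ⟨hmeas, hball, ?_⟩
  intro V hV
  rw [Metric.isOpen_iff]
  rintro _ ⟨v, hv, rfl⟩
  obtain ⟨ε, hε, hb⟩ := Metric.isOpen_iff.mp hV v hv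
  refine ⟨ρ * (ε/2), by positivity, ?_⟩
  intro u hu
  have : u ∈ closedBall (f v) (ρ * (ε/2)) := ball_subset_closedBall hu
  rw [← hball v (ε/2) (by positivity)] at this
  obtain ⟨w, hw, rfl⟩ := this
  refine ⟨w, hb ?_, rfl⟩
  rw [mem_ball]
  exact lt_of_le_of_lt (mem_closedBall.mp hw) (by linarith)

/-- If Γ is an n-attractor then ∂Γ is porous (satisfies the ball
condition). -/
theorem statement8
    (n : ℕ) (hn : 1 ≤ n)
    (M : ℕ) (hM : 2 ≤ M)
    (s : Fin M → EuclideanSpace ℝ (Fin n) → EuclideanSpace ℝ (Fin n))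
    (ρ : Fin M → ℝ)
    (hρ : ∀ m, ρ m ∈ Set.Ioo (0 : ℝ) 1)
    (hsim : ∀ m x y, dist (s m x) (s m y) = ρ m * dist x y)
    (Γ : Set (EuclideanSpace ℝ (Fin n)))
    (hΓne : Γ.Nonempty) (hΓcomp : IsCompact Γ)
    (hattr : Γ = ⋃ m, s m '' Γ)
    (hOSC : ∃ O : Set (EuclideanSpace ℝ (Fin n)), O.Nonempty ∧ IsOpen O ∧
      Bornology.IsBounded O ∧ (⋃ m, s m '' O) ⊆ O ∧
      ∀ m m', m ≠ m' → Disjoint (s m '' O) (s m' '' O))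
    (hsum : ∑ m, ρ m ^ n = 1) :
    IsPorousSet (frontier Γ) := by
  show ∃ η : ℝ, 0 < η ∧ η < 1 ∧
    ∀ x : EuclideanSpace ℝ (Fin n), ∀ r : ℝ, 0 < r → r < 1 →
      ∃ y : EuclideanSpace ℝ (Fin n),
        Metric.closedBall y (η * r) ⊆ Metric.closedBall x r ∧
        Metric.closedBall y (η * r) ∩ (frontier Γ) = ∅
  obtain ⟨O, hOne, hOopen, hObd, hOsub, hOdisj⟩ := hOSC
  have hρpos : ∀ m, 0 < ρ m := fun m => (hρ m).1
  have hρlt : ∀ m, ρ m < 1 := fun m => (hρ m).2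
  have hfacts := fun m => aux_similarity (s m) (ρ m) (hρpos m) (fun x y => hsim m x y)
  have hmeas : ∀ m A, volume (s m '' A) = ENNReal.ofReal (ρ m ^ n) * volume A :=
    fun m => (hfacts m).1
  have hball : ∀ m z δ, 0 ≤ δ → s m '' closedBall z δ = closedBall (s m z) (ρ m * δ) :=
    fun m => (hfacts m).2.1
  have hopenmap : ∀ m, IsOpenMap (s m) := fun m => (hfacts m).2.2
  have : Nonempty (Fin M) := ⟨⟨0, by omega⟩⟩
  obtain ⟨m0, -, hmin⟩ := Finset.exists_min_image Finset.univ ρ Finset.univ_nonempty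
  obtain ⟨m1, -, hmax⟩ := Finset.exists_max_image Finset.univ ρ Finset.univ_nonempty
  set ρmin := ρ m0 with hρmin
  set b := ρ m1 with hb
  have hminle : ∀ m, ρmin ≤ ρ m := fun m => hmin m (Finset.mem_univ m)
  have hmaxle : ∀ m, ρ m ≤ b := fun m => hmax m (Finset.mem_univ m)
  have hminpos : 0 < ρmin := hρpos m0
  have hminlt : ρmin < 1 := hρlt m0
  have hbpos : 0 < b := hρpos m1
  have hblt : b < 1 := hρlt m1
  -- decompose points of Γ
  have hdec : ∀ p ∈ Γ, ∃ m q, q ∈ Γ ∧ p = s m q := by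
    intro p hp
    rw [hattr] at hp
    simp only [mem_iUnion, mem_image] at hp
    obtain ⟨m, q, hq, hqe⟩ := hp
    exact ⟨m, q, hq, hqe.symm⟩
  have hsmΓ : ∀ m q, q ∈ Γ → s m q ∈ Γ := by
    intro m q hq
    have : s m q ∈ ⋃ m, s m '' Γ := mem_iUnion.mpr ⟨m, mem_image_of_mem _ hq⟩
    rwa [← hattr] at this
  have hsmO : ∀ m, s m '' O ⊆ O := by
    intro m
    exact (subset_iUnion (fun m => s m '' O) m).trans hOsub
  -- word machinery
  set S : List (Fin M) → EuclideanSpace ℝ (Fin n) → EuclideanSpace ℝ (Fin n) :=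
    fun l x => l.foldr s x with hSdef
  set P : List (Fin M) → ℝ := fun l => (l.map ρ).prod with hPdef
  have hSnil : ∀ x, S [] x = x := fun x => rfl
  have hScons : ∀ m l x, S (m :: l) x = s m (S l x) := fun m l x => rfl
  have hPnil : P [] = 1 := rfl
  have hPcons : ∀ m l, P (m :: l) = ρ m * P l := by
    intro m l; simp [hPdef]
  have hPpos : ∀ l, 0 < P l := by
    intro l
    induction l with
    | nil => rw [hPnil]; norm_num
    | cons m l ih => rw [hPcons]; exact mul_pos (hρpos m) ih
  have hSdist : ∀ l x y, dist (S l x) (S l y) = P l * dist x y := by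
    intro l
    induction l with
    | nil => intro x y; rw [hPnil]; simp [hSnil]
    | cons m l ih =>
      intro x y
      rw [hScons, hScons, hsim, ih, hPcons, mul_assoc]
  have hSO : ∀ l, S l '' O ⊆ O := by
    intro l
    induction l with
    | nil => simp [hSnil]
    | cons m l ih =>
      have : S (m :: l) '' O = s m '' (S l '' O) := by
        rw [image_image]; rfl
      rw [this]
      exact (image_mono ih).trans (hsmO m)
  have hSΓ : ∀ l q, q ∈ Γ → S l q ∈ Γ := by
    intro l
    induction l with
    | nil => intro q hq; rw [hSnil]; exact hq
    | cons m l ih => intro q hq; rw [hScons]; exact hsmΓ m _ (ih q hq)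
  have hSball : ∀ l z δ, 0 ≤ δ → S l '' closedBall z δ = closedBall (S l z) (P l * δ) := by
    intro l
    induction l with
    | nil => intro z δ hδ; rw [hPnil, one_mul]; simp [hSnil]
    | cons m l ih =>
      intro z δ hδ
      have h1 : S (m :: l) '' closedBall z δ = s m '' (S l '' closedBall z δ) := by
        rw [image_image]; rfl
      rw [h1, ih z δ hδ, hball m _ _ (mul_nonneg (hPpos l).le hδ), hScons, hPcons, mul_assoc]
  -- O ⊆ Γ
  have hOsubΓ : O ⊆ Γ := by
    set U : ℕ → Set (EuclideanSpace ℝ (Fin n)) :=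
      fun k => Nat.rec O (fun _ Uk => ⋃ m, s m '' Uk) k with hUdef
    have hU0 : U 0 = O := rfl
    have hUsucc : ∀ k, U (k + 1) = ⋃ m, s m '' U k := fun k => rfl
    have hUopen : ∀ k, IsOpen (U k) := by
      intro k
      induction k with
      | zero => exact hOopen
      | succ k ih => rw [hUsucc]; exact isOpen_iUnion fun m => hopenmap m _ ih
    have hUsub : ∀ k, U k ⊆ O := by
      intro k
      induction k with
      | zero => exact subset_rfl
      | succ k ih =>
        rw [hUsucc]
        exact iUnion_subset fun m => (image_mono ih).trans (hsmO m)
    have hOfin : volume O ≠ ⊤ := by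
      obtain ⟨T, hT⟩ := hObd.subset_closedBall 0
      exact (lt_of_le_of_lt (measure_mono hT) measure_closedBall_lt_top).ne
    have hU1 : volume (⋃ m, s m '' O) = volume O := by
      rw [measure_iUnion (fun m m' hmm' => hOdisj m m' hmm')
        (fun m => ((hopenmap m) O hOopen).measurableSet)]
      rw [tsum_fintype]
      rw [Finset.sum_congr rfl (fun m _ => hmeas m O)]
      rw [← Finset.sum_mul,
        ← ENNReal.ofReal_sum_of_nonneg (fun m _ => pow_nonneg (hρpos m).le n),
        hsum, ENNReal.ofReal_one, one_mul]
    have hnull : ∀ k, volume (O \ U k) = 0 := by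
      intro k
      induction k with
      | zero => rw [hU0]; simp
      | succ k ih =>
        have hsub2 : O \ U (k + 1) ⊆ (O \ ⋃ m, s m '' O) ∪ (⋃ m, s m '' (O \ U k)) := by
          rintro x ⟨hxO, hxU⟩
          by_cases hx1 : x ∈ ⋃ m, s m '' O
          · right
            simp only [mem_iUnion, mem_image] at hx1
            obtain ⟨m, o, ho, rfl⟩ := hx1
            refine mem_iUnion.mpr ⟨m, o, ⟨ho, ?_⟩, rfl⟩
            intro hoU
            exact hxU (by rw [hUsucc]; exact mem_iUnion.mpr ⟨m, mem_image_of_mem _ hoU⟩)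
          · left; exact ⟨hxO, hx1⟩
        refine measure_mono_null hsub2 (measure_union_null ?_ ?_)
        · have hmsble : MeasurableSet (⋃ m, s m '' O) :=
            MeasurableSet.iUnion fun m => ((hopenmap m) O hOopen).measurableSet
          have h1 : volume (O \ ⋃ m, s m '' O) = volume O - volume (⋃ m, s m '' O) :=
            measure_diff hOsub hmsble.nullMeasurableSet (by rw [hU1]; exact hOfin)
          rw [h1, hU1, tsub_self]
        · refine measure_iUnion_null fun m => ?_
          rw [hmeas m, ih, mul_zero]
    obtain ⟨γ0, hγ0⟩ := hΓne
    obtain ⟨C, hC⟩ := hObd.subset_closedBall γ0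
    have hC0 : 0 ≤ C := by
      obtain ⟨o, ho⟩ := hOne
      exact le_trans dist_nonneg (mem_closedBall.mp (hC ho))
    have hclaim : ∀ k x, x ∈ U k → ∃ γ ∈ Γ, dist x γ ≤ b ^ k * C := by
      intro k
      induction k with
      | zero =>
        intro x hx
        refine ⟨γ0, hγ0, ?_⟩
        rw [pow_zero, one_mul]
        exact mem_closedBall.mp (hC hx)
      | succ k ih =>
        intro x hx
        rw [hUsucc] at hx
        simp only [mem_iUnion, mem_image] at hx
        obtain ⟨m, y, hy, rfl⟩ := hx
        obtain ⟨γ, hγ, hd⟩ := ih y hy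
        refine ⟨s m γ, hsmΓ m γ hγ, ?_⟩
        rw [hsim]
        calc ρ m * dist y γ ≤ b * (b ^ k * C) := by
              have h1 : 0 ≤ dist y γ := dist_nonneg
              have h2 : ρ m ≤ b := hmaxle m
              nlinarith [pow_pos hbpos k]
        _ = b ^ (k + 1) * C := by ring
    have hInt : (⋂ k, U k) ⊆ Γ := by
      intro x hx
      have hxk : ∀ k, x ∈ U k := fun k => mem_iInter.mp hx k
      rw [← hΓcomp.isClosed.closure_eq]
      rw [Metric.mem_closure_iff]
      intro ε hε
      obtain ⟨k, hk⟩ := exists_pow_lt_of_lt_one (x := ε / (C + 1)) (by positivity) hblt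
      obtain ⟨γ, hγ, hd⟩ := hclaim k x (hxk k)
      refine ⟨γ, hγ, lt_of_le_of_lt hd ?_⟩
      calc b ^ k * C ≤ (ε / (C + 1)) * C := by nlinarith [pow_pos hbpos k]
      _ < ε := by
          rw [div_mul_eq_mul_div, div_lt_iff₀ (by linarith)]
          nlinarith
    have hdiffnull : volume (O \ Γ) = 0 := by
      have h1 : O \ Γ ⊆ ⋃ k, O \ U k := by
        rintro x ⟨hxO, hxΓ⟩
        by_contra hx
        simp only [mem_iUnion, mem_diff, not_exists, not_and, not_not] at hx
        exact hxΓ (hInt (mem_iInter.mpr fun k => hx k hxO))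
      exact measure_mono_null h1 (measure_iUnion_null hnull)
    have hempty : O \ Γ = ∅ := by
      by_contra hne
      rw [← ne_eq, ← nonempty_iff_ne_empty] at hne
      have := (hOopen.sdiff hΓcomp.isClosed).measure_pos volume hne
      rw [hdiffnull] at this
      exact lt_irrefl 0 this
    exact diff_eq_empty.mp hempty
  -- greedy word selection
  have hgreedy : ∀ K : ℕ, ∀ ε : ℝ, 0 < ε → ε ≤ 1 → b ^ K ≤ ε → ∀ p ∈ Γ,
      ∃ l q, q ∈ Γ ∧ p = S l q ∧ P l ≤ ε ∧ ρmin * ε ≤ P l := by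
    intro K
    induction K with
    | zero =>
      intro ε hε hε1 hK p hp
      have hε' : ε = 1 := le_antisymm hε1 (by simpa using hK)
      obtain ⟨m, q, hq, hpe⟩ := hdec p hp
      refine ⟨[m], q, hq, by rw [hScons, hSnil]; exact hpe, ?_, ?_⟩
      · rw [hPcons, hPnil, mul_one, hε']; exact (hρlt m).le
      · rw [hPcons, hPnil, mul_one, hε', mul_one]; exact hminle m
    | succ K ih =>
      intro ε hε hε1 hK p hp
      obtain ⟨m, q', hq', hpe⟩ := hdec p hp
      by_cases hcase : ρ m ≤ ε
      · refine ⟨[m], q', hq', by rw [hScons, hSnil]; exact hpe, ?_, ?_⟩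
        · rw [hPcons, hPnil, mul_one]; exact hcase
        · rw [hPcons, hPnil, mul_one]
          calc ρmin * ε ≤ ρmin * 1 := by nlinarith
          _ ≤ ρ m := by rw [mul_one]; exact hminle m
      · push_neg at hcase
        have hρm := hρpos m
        have hε'pos : 0 < ε / ρ m := by positivity
        have hε'le : ε / ρ m ≤ 1 := by
          rw [div_le_one hρm]; exact hcase.le
        have hbK : b ^ K ≤ ε / ρ m := by
          rw [le_div_iff₀ hρm]
          calc b ^ K * ρ m ≤ b ^ K * b :=
            mul_le_mul_of_nonneg_left (hmaxle m) (pow_nonneg hbpos.le K)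
          _ = b ^ (K + 1) := by ring
          _ ≤ ε := hK
        obtain ⟨l', q, hqΓ, heq, hub, hlb⟩ := ih (ε / ρ m) hε'pos hε'le hbK q' hq'
        refine ⟨m :: l', q, hqΓ, ?_, ?_, ?_⟩
        · rw [hScons, ← heq]; exact hpe
        · rw [hPcons]
          calc ρ m * P l' ≤ ρ m * (ε / ρ m) := by nlinarith
          _ = ε := by field_simp
        · rw [hPcons]
          have : ρmin * ε = ρ m * (ρmin * (ε / ρ m)) := by field_simp
          rw [this]
          nlinarith
  -- porosity setup
  obtain ⟨z, hzO⟩ := hOne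
  obtain ⟨δ2, hδ2, hδball⟩ := Metric.isOpen_iff.mp hOopen z hzO
  set δ := δ2 / 2 with hδdef
  have hδpos : 0 < δ := by positivity
  have hδO : closedBall z δ ⊆ O := by
    intro u hu
    apply hδball
    rw [mem_ball]
    exact lt_of_le_of_lt (mem_closedBall.mp hu) (by rw [hδdef]; linarith)
  obtain ⟨A, hA⟩ := hΓcomp.isBounded.subset_closedBall z
  have hA0 : 0 ≤ A := by
    obtain ⟨γ0, hγ0⟩ := hΓne
    exact le_trans dist_nonneg (mem_closedBall.mp (hA hγ0))
  set R := A + δ + 1 with hRdef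
  have hRpos : 0 < R := by rw [hRdef]; linarith
  set ε₀ := 1 / (2 * R) with hε₀def
  have hε₀pos : 0 < ε₀ := by positivity
  set η := ρmin * ε₀ * δ with hηdef
  have hηpos : 0 < η := by positivity
  have hηsmall : η ≤ ε₀ * δ := by
    rw [hηdef]; nlinarith
  have hε₀δ : ε₀ * δ ≤ 1/2 := by
    rw [hε₀def, hRdef]
    rw [div_mul_eq_mul_div, div_le_div_iff₀ (by linarith) (by norm_num)]
    nlinarith
  have hη12 : η ≤ 1/2 := hηsmall.trans hε₀δ
  have hηlt1 : η < 1 := lt_of_le_of_lt hη12 (by norm_num)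
  refine ⟨η, hηpos, hηlt1, ?_⟩
  intro x r hr hr1
  have hint : O ⊆ interior Γ := interior_maximal hOsubΓ hOopen
  have hfr : frontier Γ ⊆ Γ := by
    rw [hΓcomp.isClosed.frontier_eq]; exact diff_subset
  have hfrint : ∀ u, u ∈ interior Γ → u ∉ frontier Γ := by
    intro u hu hfu
    rw [hΓcomp.isClosed.frontier_eq] at hfu
    exact hfu.2 hu
  by_cases hcase : ∃ p ∈ Γ, dist p x ≤ r / 2
  · obtain ⟨p, hpΓ, hpx⟩ := hcase
    set ε := ε₀ * r with hεdef
    have hεpos : 0 < ε := by positivity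
    have hε1 : ε ≤ 1 := by
      rw [hεdef]
      calc ε₀ * r ≤ ε₀ * 1 := by nlinarith
      _ = ε₀ := mul_one _
      _ ≤ 1 := by
        rw [hε₀def]
        rw [div_le_one (by linarith)]
        rw [hRdef]; linarith
    obtain ⟨K, hK⟩ := exists_pow_lt_of_lt_one hεpos hblt
    obtain ⟨l, q, hqΓ, hpeq, hub, hlb⟩ := hgreedy K ε hεpos hε1 hK.le p hpΓ
    set y := S l z with hydef
    have hδP : η * r ≤ P l * δ := by
      have h1 : η * r = (ρmin * ε) * δ := by rw [hηdef, hεdef]; ring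
      rw [h1]
      nlinarith [hPpos l]
    have hin : closedBall y (η * r) ⊆ O := by
      intro u hu
      have h1 : u ∈ closedBall y (P l * δ) :=
        closedBall_subset_closedBall hδP hu
      rw [← hSball l z δ hδpos.le] at h1
      obtain ⟨w, hw, rfl⟩ := h1
      exact hSO l (mem_image_of_mem _ (hδO hw))
    refine ⟨y, ?_, ?_⟩
    · intro u hu
      rw [mem_closedBall]
      have h1 : dist u y ≤ η * r := mem_closedBall.mp hu
      have h2 : dist y p ≤ ε * A := by
        rw [hydef, hpeq, hSdist]
        have : dist z q ≤ A := by
          rw [dist_comm]; exact mem_closedBall.mp (hA hqΓ)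
        nlinarith [hPpos l]
      have h3 : η * r + ε * A ≤ r / 2 := by
        have : η + ε₀ * A ≤ 1/2 := by
          have : ε₀ * (δ + A) ≤ 1/2 := by
            rw [hε₀def, hRdef]
            rw [div_mul_eq_mul_div, div_le_div_iff₀ (by linarith) (by norm_num)]
            nlinarith
          nlinarith
        have hεA : ε * A = (ε₀ * A) * r := by rw [hεdef]; ring
        nlinarith
      calc dist u x ≤ dist u y + dist y p + dist p x := dist_triangle4 u y p x
      _ ≤ η * r + ε * A + r / 2 := by linarith
      _ ≤ r := by linarith
    · rw [eq_empty_iff_forall_notMem]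
      rintro u ⟨hu1, hu2⟩
      exact hfrint u (hint (hin hu1)) hu2
  · push_neg at hcase
    refine ⟨x, closedBall_subset_closedBall (by nlinarith), ?_⟩
    rw [eq_empty_iff_forall_notMem]
    rintro u ⟨hu1, hu2⟩
    have huΓ : u ∈ Γ := hfr hu2
    have : r / 2 < dist u x := hcase u huΓ
    have : dist u x ≤ η * r := mem_closedBall.mp hu1
    nlinarith
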